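/- Planar slices are pseudo-disks in the radial ordering sense: fix a cone direction in the plane with angular diameter < π/3, and for p ∈ ℝ², r ≥ 0 let s(p,r) = φ_p ∩ B(p,r) where φ_p is the translate of the cone with apex p. If x ∈ φ_p with ‖x − p‖ ≥ r, then x ∉ s(p, r); and if additionally y ∈ φ_p with ‖y − p‖ ≤ r ≤ ‖x − p‖ then ‖x − y‖ < ‖x − p‖. -/

import Mathlib

/-- planar slices are pseudo-disks in the radial ordering sense:
for a closed convex cone `φ ⊆ ℝ²` with apex the origin and angular diameter `< π/3`,
letting `s(p,r) = (p + φ) ∩ B(p,r)`: if `x ∈ p + φ` with `‖x − p‖ ≥ r` then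
`x ∉ s(p,r)`; and if additionally `y ∈ p + φ` with `‖y − p‖ ≤ r ≤ ‖x − p‖`
then `‖x − y‖ < ‖x − p‖`. -/
theorem planar_slice_pseudodisk (φ : Set (EuclideanSpace ℝ (Fin 2)))
    (hconv : Convex ℝ φ) (h0 : (0 : EuclideanSpace ℝ (Fin 2)) ∈ φ)
    (hcone : ∀ t : ℝ, 0 ≤ t → ∀ x ∈ φ, t • x ∈ φ)
    (hangle : ∀ x ∈ φ, ∀ y ∈ φ, x ≠ 0 → y ≠ 0 →
      InnerProductGeometry.angle x y < Real.pi / 3)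
    (p x y : EuclideanSpace ℝ (Fin 2)) (r : ℝ) (hr : 0 ≤ r)
    (hx : x - p ∈ φ) (hxr : r ≤ dist p x) :
    x ∉ ((fun z => p + z) '' φ) ∩ Metric.ball p r ∧
      (y - p ∈ φ → y ≠ p → x ≠ p → dist p y ≤ r → dist x y < dist x p) := by
  constructor
  · rintro ⟨-, hball⟩
    rw [Metric.mem_ball, dist_comm] at hball
    exact absurd hxr (not_le.mpr hball)
  · intro hy hyp hxp hyr
    set a := x - p with ha_def
    set b := y - p with hb_def
    have ha : a ≠ 0 := sub_ne_zero.mpr hxp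
    have hb : b ≠ 0 := sub_ne_zero.mpr hyp
    have hA : 0 < ‖a‖ := norm_pos_iff.mpr ha
    have hB : 0 < ‖b‖ := norm_pos_iff.mpr hb
    have hBA : ‖b‖ ≤ ‖a‖ := by
      have h1 : ‖b‖ ≤ r := by
        rwa [dist_eq_norm, ← neg_sub, norm_neg] at hyr
      have h2 : r ≤ ‖a‖ := by
        rwa [dist_eq_norm, ← neg_sub, norm_neg] at hxr
      linarith
    have hang := hangle a hx b hy ha hb
    have hmemθ : InnerProductGeometry.angle a b ∈ Set.Icc 0 Real.pi :=
      ⟨InnerProductGeometry.angle_nonneg a b, InnerProductGeometry.angle_le_pi a b⟩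
    have hmemπ : Real.pi / 3 ∈ Set.Icc 0 Real.pi :=
      ⟨by positivity, by linarith [Real.pi_pos]⟩
    have hcos : (1:ℝ)/2 < Real.cos (InnerProductGeometry.angle a b) := by
      have := Real.strictAntiOn_cos hmemθ hmemπ hang
      rwa [Real.cos_pi_div_three] at this
    have hcosval := InnerProductGeometry.cos_angle a b
    have hinner : ‖a‖ * ‖b‖ / 2 < (inner ℝ a b : ℝ) := by
      have : (inner ℝ a b : ℝ) = Real.cos (InnerProductGeometry.angle a b) * (‖a‖ * ‖b‖) := by
        rw [hcosval]; field_simp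
      rw [this]
      nlinarith [mul_pos hA hB]
    have hsq : ‖a - b‖ ^ 2 < ‖a‖ ^ 2 := by
      have hns := @norm_sub_sq_real (EuclideanSpace ℝ (Fin 2)) _ _ a b
      nlinarith
    have hlt : ‖a - b‖ < ‖a‖ := by
      exact lt_of_pow_lt_pow_left₀ 2 (norm_nonneg _) hsq
    have h1 : dist x y = ‖a - b‖ := by
      rw [dist_eq_norm, ha_def, hb_def, sub_sub_sub_cancel_right]
    have h2 : dist x p = ‖a‖ := by rw [dist_eq_norm]
    rw [h1, h2]; exact hlt
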